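/- Let n ≥ 1, l ≥ 1, and fix L = (L_0,…,L_n) ∈ ℤ_{≥0}^{n+1} with L_0+⋯+L_n = l (a dominant affine weight of level l for A_n^{(1)}). Call γ ∈ B_l admissible (with respect to L) if γ_i ≤ L_i for all i ∈ {0,…,n}. Then there exists a set S of pairs (γ', i) with γ' ∈ B_l, i ∈ {0,…,n} and γ'_i = L_i + 1, such that the string sets {f_i^t(γ') : 0 ≤ t ≤ φ_i(γ')} for (γ', i) ∈ S are pairwise disjoint and their union equals the set {γ ∈ B_l : γ is not admissible}. (This is the string-decomposition property of non-admissible elements, proved by the authors for the l-fold symmetric tensor perfect crystal of U_q(A_n^{(1)}).) -/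

import Mathlib

open Finset

/-! The level-`l` perfect crystal `B_l` of `U_q(A_n^{(1)})` given by `l`-fold symmetric
tensors: its elements are content vectors `γ ∈ ℤ_{≥0}^{n+1}` with `Σ_k γ_k = l`.
For `i ∈ {0,…,n}` one has `ε_i(γ) = γ_i`, `φ_i(γ) = γ_{i⊖1}` and, for `0 ≤ t ≤ φ_i(γ)`,
`f_i^t(γ) = γ - t·e_{i⊖1} + t·e_i`, where `i⊖1 = i-1 mod (n+1)` (realized by the cyclic
subtraction `i - 1` of `Fin (n+1)`). -/

/-- `f_i^t(γ')` for a pair `pr = (γ', i)`:  subtract `t` from the entry at `i⊖1` and add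
`t` to the entry at `i`. -/
def fstep {n : ℕ} (pr : (Fin (n + 1) → ℕ) × Fin (n + 1)) (t : ℕ) : Fin (n + 1) → ℕ :=
  fun k => if k = pr.2 - 1 then pr.1 k - t else if k = pr.2 then pr.1 k + t else pr.1 k

open Fin.NatCast

/-- `d_k = γ_k - L_k` as an integer. -/
def dd {n : ℕ} (L γ : Fin (n+1) → ℕ) (k : Fin (n+1)) : ℤ := (γ k : ℤ) - (L k : ℤ)

/-- prefix sums of `dd` (ℕ-indexed, meaningful for `m ≤ n`). -/
def QQ {n : ℕ} (L γ : Fin (n+1) → ℕ) (m : ℕ) : ℤ :=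
  ∑ k ∈ Finset.range (m+1), dd L γ (k : Fin (n+1))

/-- maximum of prefix sums. -/
def MM {n : ℕ} (L γ : Fin (n+1) → ℕ) : ℤ :=
  (Finset.range (n+1)).sup' ⟨0, Finset.mem_range.mpr (Nat.succ_pos n)⟩ (QQ L γ)

/-- indices realizing the maximum with positive `dd`. -/
def AS {n : ℕ} (L γ : Fin (n+1) → ℕ) : Finset ℕ :=
  (Finset.range (n+1)).filter (fun m => QQ L γ m = MM L γ ∧ 1 ≤ dd L γ (m : Fin (n+1)))

/-- the canonical string index (as a natural number). -/
def ccN {n : ℕ} (L γ : Fin (n+1) → ℕ) : ℕ :=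
  if h : (AS L γ).Nonempty then (AS L γ).min' h else 0

def cc {n : ℕ} (L γ : Fin (n+1) → ℕ) : Fin (n+1) := (ccN L γ : Fin (n+1))

/-- head of the string through `γ` in direction `cc L γ`. -/
def hd {n : ℕ} (L γ : Fin (n+1) → ℕ) : Fin (n+1) → ℕ := fun k =>
  if k = cc L γ - 1 then γ k + (γ (cc L γ) - (L (cc L γ) + 1))
  else if k = cc L γ then L (cc L γ) + 1 else γ k

section lemmas
variable {n l : ℕ}

lemma QQ_succ (L γ : Fin (n+1) → ℕ) (m : ℕ) :
    QQ L γ (m+1) = QQ L γ m + dd L γ ((m+1 : ℕ) : Fin (n+1)) :=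
  Finset.sum_range_succ _ _

lemma QQ_zero (L γ : Fin (n+1) → ℕ) : QQ L γ 0 = dd L γ 0 := by
  simp [QQ]

lemma QQ_le_MM (L γ : Fin (n+1) → ℕ) {m : ℕ} (h : m < n+1) : QQ L γ m ≤ MM L γ :=
  Finset.le_sup' _ (Finset.mem_range.mpr h)

lemma QQ_last (L γ : Fin (n+1) → ℕ) (hL : ∑ k, L k = l) (hγ : ∑ k, γ k = l) :
    QQ L γ n = 0 := by
  have h1 : QQ L γ n = ∑ i : Fin (n+1), dd L γ i := by
    rw [QQ, ← Fin.sum_univ_eq_sum_range (fun k => dd L γ (k : Fin (n+1))) (n+1)]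
    exact Finset.sum_congr rfl (fun i _ => by rw [Fin.cast_val_eq_self])
  have h2 : ∑ i, dd L γ i = (∑ i, (γ i : ℤ)) - ∑ i, (L i : ℤ) := by
    rw [← Finset.sum_sub_distrib]; rfl
  have h3 : (∑ i, (γ i : ℤ)) = (l : ℤ) := by rw [← Nat.cast_sum, hγ]
  have h4 : (∑ i, (L i : ℤ)) = (l : ℤ) := by rw [← Nat.cast_sum, hL]
  rw [h1, h2, h3, h4]; ring

lemma sum_ind {m : ℕ} (hm : m < n+1) (a : Fin (n+1)) (s : ℤ) :
    ∑ k ∈ Finset.range (m+1), (if ((k : Fin (n+1)) = a) then s else 0)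
      = if (a : ℕ) ≤ m then s else 0 := by
  have hcongr : ∀ k ∈ Finset.range (m+1),
      (if ((k : Fin (n+1)) = a) then s else 0) = (if k = (a : ℕ) then s else 0) := by
    intro k hk
    have hk' : k < n+1 := by
      have := Finset.mem_range.mp hk; omega
    have hiff : ((k : Fin (n+1)) = a) ↔ (k = (a : ℕ)) := by
      rw [Fin.ext_iff, Fin.val_cast_of_lt hk']
    simp only [hiff]
  rw [Finset.sum_congr rfl hcongr, Finset.sum_ite_eq' (Finset.range (m+1)) (a : ℕ) (fun _ => s)]
  simp [Nat.lt_succ_iff]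

lemma sub_one_ne (hn : 1 ≤ n) (i : Fin (n+1)) : i - 1 ≠ i := by
  intro h
  have h1 := Fin.coe_sub_one i
  by_cases h0 : i = 0
  · rw [if_pos h0] at h1
    rw [h, h0] at h1
    simp at h1
    omega
  · rw [if_neg h0] at h1
    have hv : i.val ≠ 0 := fun hh => h0 (Fin.ext (by simpa using hh))
    rw [h] at h1
    omega

lemma AS_nonempty (L γ : Fin (n+1) → ℕ) (hL : ∑ k, L k = l) (hγ : ∑ k, γ k = l)
    (hv : ∃ i, 1 ≤ dd L γ i) : (AS L γ).Nonempty := by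
  obtain ⟨i₀, hi₀⟩ := hv
  obtain ⟨j0, hj0mem, hj0⟩ := Finset.exists_mem_eq_sup'
    (⟨0, Finset.mem_range.mpr (Nat.succ_pos n)⟩ : (Finset.range (n+1)).Nonempty) (QQ L γ)
  set A : Finset ℕ := (Finset.range (n+1)).filter (fun m => QQ L γ m = MM L γ) with hA
  have hAne : A.Nonempty := ⟨j0, by
    simp only [hA, Finset.mem_filter]
    exact ⟨hj0mem, by rw [MM, hj0]⟩⟩
  set j := A.min' hAne with hj
  have hjA : j ∈ A := Finset.min'_mem _ _
  have hjr : j < n+1 := Finset.mem_range.mp (Finset.mem_filter.mp hjA).1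
  have hjQ : QQ L γ j = MM L γ := (Finset.mem_filter.mp hjA).2
  by_cases hdj : 1 ≤ dd L γ (j : Fin (n+1))
  · exact ⟨j, by simp only [AS, Finset.mem_filter]; exact ⟨Finset.mem_range.mpr hjr, hjQ, hdj⟩⟩
  · have hj0' : j = 0 := by
      by_contra h
      obtain ⟨m, hmj⟩ := Nat.exists_eq_succ_of_ne_zero h
      have hmr : m < n+1 := by omega
      have hmA : m ∉ A := by
        intro hmA
        have := Finset.min'_le _ _ hmA
        omega
      have hne : QQ L γ m ≠ MM L γ := by
        intro h'
        exact hmA (by simp only [hA, Finset.mem_filter]; exact ⟨Finset.mem_range.mpr hmr, h'⟩)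
      have hlt : QQ L γ m < MM L γ := lt_of_le_of_ne (QQ_le_MM L γ hmr) hne
      have hmj' : j = m + 1 := hmj
      rw [hmj'] at hjQ hdj
      have hs := QQ_succ L γ m
      omega
    have hM0 : QQ L γ 0 = MM L γ := by rw [← hj0']; exact hjQ
    have hQ0 : QQ L γ 0 = dd L γ 0 := QQ_zero L γ
    have hdj0 : ¬ 1 ≤ dd L γ 0 := by
      rw [hj0'] at hdj
      simpa using hdj
    have hQn : QQ L γ n = 0 := QQ_last L γ hL hγ
    have hQnle : QQ L γ n ≤ MM L γ := QQ_le_MM L γ (by omega)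
    have hMM0 : MM L γ = 0 := by omega
    have hi0v : (i₀ : ℕ) ≠ 0 := by
      intro hh
      have : i₀ = 0 := Fin.ext (by simpa using hh)
      rw [this] at hi₀
      omega
    set B : Finset ℕ := (Finset.range (n+1)).filter
      (fun m => (i₀ : ℕ) ≤ m ∧ QQ L γ m = 0) with hB
    have hBne : B.Nonempty := ⟨n, by
      simp only [hB, Finset.mem_filter]
      have hle : (i₀ : ℕ) ≤ n := Fin.is_le i₀
      exact ⟨Finset.mem_range.mpr (by omega), hle, hQn⟩⟩
    set j' := B.min' hBne with hj'
    have hj'B : j' ∈ B := Finset.min'_mem _ _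
    have hj'r : j' < n+1 := Finset.mem_range.mp (Finset.mem_filter.mp hj'B).1
    have hj'i : (i₀ : ℕ) ≤ j' := (Finset.mem_filter.mp hj'B).2.1
    have hj'Q : QQ L γ j' = 0 := (Finset.mem_filter.mp hj'B).2.2
    have hdd' : 1 ≤ dd L γ (j' : Fin (n+1)) := by
      by_cases hji : j' = (i₀ : ℕ)
      · rw [hji, Fin.cast_val_eq_self]; exact hi₀
      · have hlt : (i₀ : ℕ) < j' := lt_of_le_of_ne hj'i (Ne.symm hji)
        have hj'ne : j' ≠ 0 := by omega
        obtain ⟨m, hmj⟩ := Nat.exists_eq_succ_of_ne_zero hj'ne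
        have hmr : m < n+1 := by omega
        have hmB : m ∉ B := by
          intro hmB
          have := Finset.min'_le _ _ hmB
          omega
        have hQm : QQ L γ m ≠ 0 := by
          intro h'
          exact hmB (by
            simp only [hB, Finset.mem_filter]
            exact ⟨Finset.mem_range.mpr hmr, by omega, h'⟩)
        have hQmle : QQ L γ m ≤ MM L γ := QQ_le_MM L γ hmr
        have hmj' : j' = m + 1 := hmj
        rw [hmj'] at hj'Q ⊢
        have hs := QQ_succ L γ m
        omega
    exact ⟨j', by
      simp only [AS, Finset.mem_filter]
      exact ⟨Finset.mem_range.mpr hj'r, by omega, hdd'⟩⟩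

end lemmas


section invariance
variable {n l : ℕ}

lemma QQ_shift (hn : 1 ≤ n) (L γ δ : Fin (n+1) → ℕ) (i : Fin (n+1)) (s : ℤ)
    (hoff : ∀ k, k ≠ i - 1 → k ≠ i → δ k = γ k)
    (hpred : (δ (i-1) : ℤ) = (γ (i-1) : ℤ) - s)
    (hat : (δ i : ℤ) = (γ i : ℤ) + s)
    (m : ℕ) (hm : m < n+1) :
    QQ L δ m = QQ L γ m + (if (i : ℕ) ≤ m then s else 0)
      - (if ((i-1 : Fin (n+1)) : ℕ) ≤ m then s else 0) := by
  have hdd : ∀ k : Fin (n+1),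
      dd L δ k = dd L γ k + (if k = i then s else 0) - (if k = i - 1 then s else 0) := by
    intro k
    by_cases h1 : k = i
    · have h2 : ¬ k = i - 1 := by rw [h1]; exact (sub_one_ne hn i).symm
      rw [if_pos h1, if_neg h2]
      subst h1
      simp only [dd]
      omega
    · by_cases h2 : k = i - 1
      · rw [if_neg h1, if_pos h2]
        subst h2
        simp only [dd]
        omega
      · rw [if_neg h1, if_neg h2]
        simp only [dd, hoff k h2 h1]
        ring
  unfold QQ
  have h1 : ∑ k ∈ Finset.range (m+1), dd L δ (k : Fin (n+1))
      = ∑ k ∈ Finset.range (m+1), ((dd L γ (k : Fin (n+1))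
          + if ((k : Fin (n+1))) = i then s else 0)
          - if ((k : Fin (n+1))) = i - 1 then s else 0) :=
    Finset.sum_congr rfl (fun k _ => hdd _)
  rw [h1, Finset.sum_sub_distrib, Finset.sum_add_distrib, sum_ind hm i s, sum_ind hm (i-1) s]

lemma ccN_invariant (hn : 1 ≤ n) (L γ δ : Fin (n+1) → ℕ)
    (hL : ∑ k, L k = l) (hγ : ∑ k, γ k = l)
    (hne : (AS L γ).Nonempty) (s : ℤ)
    (hoff : ∀ k, k ≠ cc L γ - 1 → k ≠ cc L γ → δ k = γ k)
    (hpred : (δ (cc L γ - 1) : ℤ) = (γ (cc L γ - 1) : ℤ) - s)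
    (hat : (δ (cc L γ) : ℤ) = (γ (cc L γ) : ℤ) + s)
    (hδ1 : 1 ≤ dd L δ (cc L γ)) :
    ccN L δ = ccN L γ := by
  have hmem : ccN L γ ∈ AS L γ := by
    rw [ccN, dif_pos hne]; exact Finset.min'_mem _ _
  rw [AS, Finset.mem_filter] at hmem
  obtain ⟨hranmem, hQc, hdc⟩ := hmem
  have hiN : ccN L γ < n + 1 := Finset.mem_range.mp hranmem
  have hiv : (cc L γ : ℕ) = ccN L γ := Fin.val_cast_of_lt hiN
  have hcast : ((ccN L γ : ℕ) : Fin (n+1)) = cc L γ := rfl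
  rw [hcast] at hdc
  have hshift : ∀ m, m < n+1 → QQ L δ m = QQ L γ m + (if ((cc L γ) : ℕ) ≤ m then s else 0)
      - (if ((cc L γ - 1 : Fin (n+1)) : ℕ) ≤ m then s else 0) :=
    fun m hm => QQ_shift hn L γ δ (cc L γ) s hoff hpred hat m hm
  by_cases hi0 : ccN L γ = 0
  · rw [hi0] at hQc
    have hieq : cc L γ = 0 := by unfold cc; rw [hi0]; exact Nat.cast_zero
    have hp : ((cc L γ - 1 : Fin (n+1)) : ℕ) = n := by
      rw [Fin.coe_sub_one, if_pos hieq]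
    have hQδ0 : QQ L δ 0 = MM L γ + s := by
      rw [hshift 0 (by omega), hp, hiv, hi0]
      rw [if_pos (le_refl 0), if_neg (by omega)]
      omega
    have hdδ0 : 1 ≤ dd L δ 0 := by rw [← hieq]; exact hδ1
    have hQδ0' : QQ L δ 0 = dd L δ 0 := QQ_zero L δ
    have hpos : 1 ≤ MM L γ + s := by omega
    have hQγn : QQ L γ n = 0 := QQ_last L γ hL hγ
    have hMδ : MM L δ = MM L γ + s := by
      apply le_antisymm
      · apply Finset.sup'_le
        intro m hm
        have hmr : m < n+1 := Finset.mem_range.mp hm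
        by_cases hmn : m = n
        · rw [hmn, hshift n (by omega), hp, hiv, hi0, if_pos (by omega), if_pos (le_refl n)]
          omega
        · rw [hshift m (by omega), hp, hiv, hi0, if_pos (by omega), if_neg (by omega)]
          have := QQ_le_MM L γ hmr
          omega
      · rw [← hQδ0]; exact QQ_le_MM L δ (by omega)
    have h0AS : (0:ℕ) ∈ AS L δ := by
      rw [AS, Finset.mem_filter]
      refine ⟨Finset.mem_range.mpr (by omega), by rw [hQδ0, hMδ], ?_⟩
      rw [Nat.cast_zero]; exact hdδ0
    have hneδ : (AS L δ).Nonempty := ⟨0, h0AS⟩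
    rw [ccN, dif_pos hneδ, hi0]
    exact Nat.le_zero.mp (Finset.min'_le _ _ h0AS)
  · have hine : cc L γ ≠ 0 := by
      intro h
      apply hi0
      rw [← hiv, h, Fin.val_zero]
    have hp : ((cc L γ - 1 : Fin (n+1)) : ℕ) = ccN L γ - 1 := by
      rw [Fin.coe_sub_one, if_neg hine, hiv]
    have hQeq : ∀ m, m < n+1 → m ≠ ccN L γ - 1 → QQ L δ m = QQ L γ m := by
      intro m hm hm'
      rw [hshift m hm, hp, hiv]
      by_cases h : ccN L γ ≤ m
      · rw [if_pos h, if_pos (by omega)]; ring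
      · rw [if_neg h, if_neg (by omega)]; ring
    have hQpred : QQ L δ (ccN L γ - 1) = QQ L γ (ccN L γ - 1) - s := by
      rw [hshift (ccN L γ - 1) (by omega), hp, hiv, if_neg (by omega), if_pos (le_refl _)]
      ring
    have hsucc : QQ L γ (ccN L γ) = QQ L γ (ccN L γ - 1) + dd L γ (cc L γ) := by
      have h := QQ_succ L γ (ccN L γ - 1)
      rw [show ccN L γ - 1 + 1 = ccN L γ by omega] at h
      rw [h, hcast]
    have hsuccδ : QQ L δ (ccN L γ) = QQ L δ (ccN L γ - 1) + dd L δ (cc L γ) := by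
      have h := QQ_succ L δ (ccN L γ - 1)
      rw [show ccN L γ - 1 + 1 = ccN L γ by omega] at h
      rw [h, hcast]
    have hδiN : QQ L δ (ccN L γ) = MM L γ := by
      rw [hQeq _ hiN (by omega)]; exact hQc
    have hbγ : QQ L γ (ccN L γ - 1) ≤ MM L γ - 1 := by omega
    have hbδ : QQ L δ (ccN L γ - 1) ≤ MM L γ - 1 := by omega
    have hMδ : MM L δ = MM L γ := by
      apply le_antisymm
      · apply Finset.sup'_le
        intro m hm
        have hmr : m < n+1 := Finset.mem_range.mp hm
        by_cases hm' : m = ccN L γ - 1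
        · subst hm'; omega
        · rw [hQeq m hmr hm']; exact QQ_le_MM L γ hmr
      · rw [← hδiN]; exact QQ_le_MM L δ hiN
    have hASeq : AS L δ = AS L γ := by
      ext m
      simp only [AS, Finset.mem_filter, Finset.mem_range]
      by_cases hm : m < n+1
      · by_cases hm' : m = ccN L γ - 1
        · subst hm'
          constructor
          · rintro ⟨-, hQ, -⟩; rw [hMδ] at hQ; omega
          · rintro ⟨-, hQ, -⟩; omega
        · by_cases hmi : m = ccN L γ
          · subst hmi
            constructor
            · rintro ⟨-, -, -⟩
              refine ⟨hm, hQc, by rw [hcast]; exact hdc⟩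
            · rintro ⟨-, -, -⟩
              refine ⟨hm, by rw [hδiN, hMδ], by rw [hcast]; exact hδ1⟩
          · have hne1 : (m : Fin (n+1)) ≠ cc L γ - 1 := by
              intro h
              apply hm'
              have h2 := congrArg Fin.val h
              rw [Fin.val_cast_of_lt hm, hp] at h2
              exact h2
            have hne2 : (m : Fin (n+1)) ≠ cc L γ := by
              intro h
              apply hmi
              have h2 := congrArg Fin.val h
              rw [Fin.val_cast_of_lt hm, hiv] at h2
              exact h2
            have hddm : dd L δ (m : Fin (n+1)) = dd L γ (m : Fin (n+1)) := by
              simp only [dd, hoff _ hne1 hne2]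
            rw [hQeq m hm hm', hMδ, hddm]
      · constructor
        · rintro ⟨h, -, -⟩; omega
        · rintro ⟨h, -, -⟩; omega
    have hneδ : (AS L δ).Nonempty := by rw [hASeq]; exact hne
    rw [ccN, ccN, dif_pos hneδ, dif_pos hne]
    apply le_antisymm
    · apply Finset.min'_le
      rw [hASeq]
      exact Finset.min'_mem _ _
    · apply Finset.min'_le
      rw [← hASeq]
      exact Finset.min'_mem _ _

end invariance


section headlemmas
variable {n l : ℕ}

lemma cc_mem_AS (L γ : Fin (n+1) → ℕ) (hne : (AS L γ).Nonempty) :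
    ccN L γ < n+1 ∧ QQ L γ (ccN L γ) = MM L γ ∧ 1 ≤ dd L γ (cc L γ) := by
  have hmem : ccN L γ ∈ AS L γ := by
    rw [ccN, dif_pos hne]; exact Finset.min'_mem _ _
  rw [AS, Finset.mem_filter] at hmem
  exact ⟨Finset.mem_range.mp hmem.1, hmem.2.1, hmem.2.2⟩

lemma cc_ge (L γ : Fin (n+1) → ℕ) (hne : (AS L γ).Nonempty) :
    L (cc L γ) + 1 ≤ γ (cc L γ) := by
  have h := (cc_mem_AS L γ hne).2.2
  simp only [dd] at h
  omega

lemma hd_at (hn : 1 ≤ n) (L γ : Fin (n+1) → ℕ) :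
    hd L γ (cc L γ) = L (cc L γ) + 1 := by
  unfold hd
  rw [if_neg (Ne.symm (sub_one_ne hn (cc L γ))), if_pos rfl]

lemma hd_pred (L γ : Fin (n+1) → ℕ) :
    hd L γ (cc L γ - 1) = γ (cc L γ - 1) + (γ (cc L γ) - (L (cc L γ) + 1)) := by
  unfold hd
  rw [if_pos rfl]

lemma hd_off (L γ : Fin (n+1) → ℕ) (k : Fin (n+1))
    (h1 : k ≠ cc L γ - 1) (h2 : k ≠ cc L γ) : hd L γ k = γ k := by
  unfold hd
  rw [if_neg h1, if_neg h2]

lemma fstep_pred' (a : Fin (n+1) → ℕ) (i : Fin (n+1)) (u : ℕ) :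
    fstep (a, i) u (i - 1) = a (i-1) - u := by
  simp [fstep]

lemma fstep_at' (a : Fin (n+1) → ℕ) (i : Fin (n+1)) (u : ℕ) (h : i - 1 ≠ i) :
    fstep (a, i) u i = a i + u := by
  simp [fstep, Ne.symm h]

lemma fstep_off' (a : Fin (n+1) → ℕ) (i : Fin (n+1)) (u : ℕ) (k : Fin (n+1))
    (h1 : k ≠ i - 1) (h2 : k ≠ i) : fstep (a, i) u k = a k := by
  simp [fstep, h1, h2]

lemma sum_shift_eq (hn : 1 ≤ n) (γ δ : Fin (n+1) → ℕ) (i : Fin (n+1)) (s : ℤ)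
    (hoff : ∀ k, k ≠ i - 1 → k ≠ i → δ k = γ k)
    (hpred : (δ (i-1) : ℤ) = (γ (i-1) : ℤ) - s)
    (hat : (δ i : ℤ) = (γ i : ℤ) + s) :
    ∑ k, δ k = ∑ k, γ k := by
  have hpt : ∀ k : Fin (n+1), (δ k : ℤ)
      = ((γ k : ℤ) + (if k = i then s else 0)) - (if k = i - 1 then s else 0) := by
    intro k
    by_cases h1 : k = i
    · have h2 : ¬ k = i - 1 := by rw [h1]; exact (sub_one_ne hn i).symm
      rw [if_pos h1, if_neg h2]
      subst h1
      omega
    · by_cases h2 : k = i - 1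
      · rw [if_neg h1, if_pos h2]
        subst h2
        omega
      · rw [if_neg h1, if_neg h2, hoff k h2 h1]
        ring
  have h : (∑ k, (δ k : ℤ)) = ∑ k, (γ k : ℤ) := by
    have h1 : (∑ k, (δ k : ℤ))
        = ∑ k : Fin (n+1), (((γ k : ℤ) + (if k = i then s else 0)) - (if k = i - 1 then s else 0)) :=
      Finset.sum_congr rfl (fun k _ => hpt k)
    rw [h1, Finset.sum_sub_distrib, Finset.sum_add_distrib,
      Finset.sum_ite_eq' Finset.univ i (fun _ => s),
      Finset.sum_ite_eq' Finset.univ (i-1) (fun _ => s)]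
    simp
  have h2 : ((∑ k, δ k : ℕ) : ℤ) = ((∑ k, γ k : ℕ) : ℤ) := by
    push_cast
    exact h
  exact_mod_cast h2

lemma hd_sum (hn : 1 ≤ n) (L γ : Fin (n+1) → ℕ) (hne : (AS L γ).Nonempty) :
    ∑ k, hd L γ k = ∑ k, γ k := by
  have hγi : L (cc L γ) + 1 ≤ γ (cc L γ) := cc_ge L γ hne
  have hhdpred := hd_pred L γ
  have hhdat := hd_at hn L γ
  refine sum_shift_eq hn γ (hd L γ) (cc L γ)
    (-((γ (cc L γ) : ℤ) - ((L (cc L γ) : ℤ) + 1)))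
    (fun k h1 h2 => hd_off L γ k h1 h2) (by omega) (by omega)

lemma fstep_hd (hn : 1 ≤ n) (L γ : Fin (n+1) → ℕ) (hne : (AS L γ).Nonempty) :
    fstep (hd L γ, cc L γ) (γ (cc L γ) - (L (cc L γ) + 1)) = γ := by
  have hγi : L (cc L γ) + 1 ≤ γ (cc L γ) := cc_ge L γ hne
  funext k
  by_cases h1 : k = cc L γ - 1
  · subst h1
    rw [fstep_pred', hd_pred]
    omega
  · by_cases h2 : k = cc L γ
    · subst h2
      rw [fstep_at' _ _ _ (sub_one_ne hn _), hd_at hn]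
      omega
    · rw [fstep_off' _ _ _ k h1 h2, hd_off L γ k h1 h2]

lemma string_master (hn : 1 ≤ n) (L γ : Fin (n+1) → ℕ)
    (hL : ∑ k, L k = l) (hγ : ∑ k, γ k = l) (hne : (AS L γ).Nonempty)
    (u : ℕ) (hu : u ≤ hd L γ (cc L γ - 1)) :
    (∑ k, fstep (hd L γ, cc L γ) u k = l)
    ∧ (L (cc L γ) < fstep (hd L γ, cc L γ) u (cc L γ))
    ∧ cc L (fstep (hd L γ, cc L γ) u) = cc L γ
    ∧ hd L (fstep (hd L γ, cc L γ) u) = hd L γ := by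
  have hip : cc L γ - 1 ≠ cc L γ := sub_one_ne hn _
  have hγi : L (cc L γ) + 1 ≤ γ (cc L γ) := cc_ge L γ hne
  have hhdpred := hd_pred L γ
  have hhdat := hd_at hn L γ
  set δ := fstep (hd L γ, cc L γ) u with hδdef
  have hδpred : δ (cc L γ - 1) = hd L γ (cc L γ - 1) - u := fstep_pred' _ _ _
  have hδat : δ (cc L γ) = L (cc L γ) + 1 + u := by
    rw [hδdef, fstep_at' _ _ _ hip, hhdat]
  have hδoff : ∀ k, k ≠ cc L γ - 1 → k ≠ cc L γ → δ k = γ k := by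
    intro k h1 h2
    rw [hδdef, fstep_off' _ _ _ k h1 h2, hd_off L γ k h1 h2]
  rw [hhdpred] at hδpred hu
  have hpredZ : (δ (cc L γ - 1) : ℤ) = (γ (cc L γ - 1) : ℤ)
      - ((u : ℤ) - ((γ (cc L γ) : ℤ) - ((L (cc L γ) : ℤ) + 1))) := by omega
  have hatZ : (δ (cc L γ) : ℤ) = (γ (cc L γ) : ℤ)
      + ((u : ℤ) - ((γ (cc L γ) : ℤ) - ((L (cc L γ) : ℤ) + 1))) := by omega
  have hδ1 : 1 ≤ dd L δ (cc L γ) := by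
    simp only [dd]; omega
  have hδsum : ∑ k, δ k = l := by
    rw [sum_shift_eq hn γ δ (cc L γ) _ hδoff hpredZ hatZ, hγ]
  have hccN := ccN_invariant hn L γ δ hL hγ hne _ hδoff hpredZ hatZ hδ1
  have hcc : cc L δ = cc L γ := by
    unfold cc
    rw [hccN]
  refine ⟨hδsum, by omega, hcc, ?_⟩
  funext k
  unfold hd
  rw [hcc]
  by_cases h1 : k = cc L γ - 1
  · rw [if_pos h1, if_pos h1]
    subst h1
    omega
  · rw [if_neg h1, if_neg h1]
    by_cases h2 : k = cc L γ
    · rw [if_pos h2, if_pos h2]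
    · rw [if_neg h2, if_neg h2]
      exact hδoff k h1 h2

end headlemmas

/-- the string-decomposition property of non-admissible elements of the
`l`-fold symmetric tensor perfect crystal of `U_q(A_n^{(1)})`: given a dominant affine
weight `L` of level `l`, there is a set `S` of pairs `(γ', i)` with `γ' ∈ B_l` and
`γ'_i = L_i + 1` whose strings `{f_i^t(γ') : 0 ≤ t ≤ φ_i(γ')}` are pairwise disjoint
with union the set of non-admissible elements `{γ ∈ B_l : ∃ i, γ_i > L_i}`. -/
theorem statement14 (n l : ℕ) (hn : 1 ≤ n) (hl : 1 ≤ l)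
    (L : Fin (n + 1) → ℕ) (hL : ∑ k, L k = l) :
    ∃ S : Finset ((Fin (n + 1) → ℕ) × Fin (n + 1)),
      (∀ pr ∈ S, (∑ k, pr.1 k = l) ∧ pr.1 pr.2 = L pr.2 + 1) ∧
      (∀ pr ∈ S, ∀ pr' ∈ S, pr ≠ pr' →
        ∀ t ≤ pr.1 (pr.2 - 1), ∀ u ≤ pr'.1 (pr'.2 - 1), fstep pr t ≠ fstep pr' u) ∧
      (∀ γ : Fin (n + 1) → ℕ,
        ((∑ k, γ k = l) ∧ ∃ i, L i < γ i) ↔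
          ∃ pr ∈ S, ∃ t ≤ pr.1 (pr.2 - 1), γ = fstep pr t) := by
  classical
  set Nset : Finset (Fin (n+1) → ℕ) :=
    (Fintype.piFinset fun _ : Fin (n+1) => Finset.range (l+1)).filter
      (fun γ => (∑ k, γ k = l) ∧ ∃ i, L i < γ i) with hNset
  have hmemN : ∀ γ : Fin (n+1) → ℕ, γ ∈ Nset ↔ ((∑ k, γ k = l) ∧ ∃ i, L i < γ i) := by
    intro γ
    rw [hNset, Finset.mem_filter]
    constructor
    · exact fun h => h.2
    · intro h
      refine ⟨?_, h⟩
      rw [Fintype.mem_piFinset]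
      intro k
      rw [Finset.mem_range]
      have hle : γ k ≤ l :=
        h.1 ▸ Finset.single_le_sum (fun i _ => Nat.zero_le (γ i)) (Finset.mem_univ k)
      omega
  have hNprops : ∀ γ ∈ Nset, (∑ k, γ k = l) ∧ (AS L γ).Nonempty := by
    intro γ hγm
    rw [hmemN] at hγm
    obtain ⟨hs, i, hi⟩ := hγm
    refine ⟨hs, AS_nonempty L γ hL hs ⟨i, ?_⟩⟩
    simp only [dd]; omega
  refine ⟨Nset.image (fun γ => (hd L γ, cc L γ)), ?_, ?_, ?_⟩
  · intro pr hpr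
    rw [Finset.mem_image] at hpr
    obtain ⟨γ, hγm, rfl⟩ := hpr
    obtain ⟨hγs, hγne⟩ := hNprops γ hγm
    exact ⟨by rw [hd_sum hn L γ hγne, hγs], hd_at hn L γ⟩
  · intro pr hpr pr' hpr' hnepr t ht u hu heq
    rw [Finset.mem_image] at hpr hpr'
    obtain ⟨γ₁, h1m, rfl⟩ := hpr
    obtain ⟨γ₂, h2m, rfl⟩ := hpr'
    obtain ⟨h1s, h1ne⟩ := hNprops γ₁ h1m
    obtain ⟨h2s, h2ne⟩ := hNprops γ₂ h2m
    have k1 := string_master hn L γ₁ hL h1s h1ne t ht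
    have k2 := string_master hn L γ₂ hL h2s h2ne u hu
    apply hnepr
    calc (hd L γ₁, cc L γ₁)
        = (hd L (fstep (hd L γ₁, cc L γ₁) t), cc L (fstep (hd L γ₁, cc L γ₁) t)) := by
          rw [k1.2.2.1, k1.2.2.2]
      _ = (hd L (fstep (hd L γ₂, cc L γ₂) u), cc L (fstep (hd L γ₂, cc L γ₂) u)) := by
          rw [heq]
      _ = (hd L γ₂, cc L γ₂) := by
          rw [k2.2.2.1, k2.2.2.2]
  · intro γ
    constructor
    · rintro ⟨hγs, hviol⟩
      have hγm : γ ∈ Nset := (hmemN γ).mpr ⟨hγs, hviol⟩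
      obtain ⟨-, hγne⟩ := hNprops γ hγm
      refine ⟨(hd L γ, cc L γ), Finset.mem_image_of_mem _ hγm,
        γ (cc L γ) - (L (cc L γ) + 1), ?_, ?_⟩
      · show γ (cc L γ) - (L (cc L γ) + 1) ≤ hd L γ (cc L γ - 1)
        rw [hd_pred]
        omega
      · exact (fstep_hd hn L γ hγne).symm
    · rintro ⟨pr, hpr, t, ht, rfl⟩
      rw [Finset.mem_image] at hpr
      obtain ⟨γ₀, h0m, rfl⟩ := hpr
      obtain ⟨h0s, h0ne⟩ := hNprops γ₀ h0m
      have k := string_master hn L γ₀ hL h0s h0ne t ht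
      exact ⟨k.1, cc L γ₀, k.2.1⟩
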